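/- Mood statistic as a sum of squared second-order LP coefficients: let R_1,…,R_N be a permutation of {1,…,N}, partitioned into k groups with index sets G_1,…,G_k of sizes n_1,…,n_k. Define MOOD = (180/(N(N+1)(N²−4))) Σ_{ℓ=1}^k n_ℓ ((1/n_ℓ) Σ_{i∈G_ℓ} (R_i − (N+1)/2)² − (N²−1)/12)², and define the empirical second-order LP coefficient of group ℓ as LP₂|ℓ = (1/n_ℓ) Σ_{i∈G_ℓ} T₂(R_i), where T₂(r) = √(180/((N²−1)(N²−4))) ((r − (N+1)/2)² − (N²−1)/12). Then MOOD = ((N−1)/N) · Σ_{ℓ=1}^k n_ℓ (LP₂|ℓ)². -/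

import Mathlib

/-- Mood statistic as a sum of squared second-order LP
coefficients. `R_1,…,R_N` is a permutation of `{1,…,N}`, partitioned into `k`
nonempty groups `G_1,…,G_k` of sizes `n_1,…,n_k`. With
`MOOD = (180/(N(N+1)(N²−4))) Σ_ℓ n_ℓ ((1/n_ℓ) Σ_{i∈G_ℓ} (R_i −(N+1)/2)² −(N²−1)/12)²`
and `LP₂|ℓ = (1/n_ℓ) Σ_{i∈G_ℓ} T₂(R_i)` where
`T₂(r) = √(180/((N²−1)(N²−4))) ((r −(N+1)/2)² −(N²−1)/12)`, we have
`MOOD = ((N−1)/N) Σ_ℓ n_ℓ (LP₂|ℓ)²`. -/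
theorem mood_statistic_as_LP_coefficients
    (N k : ℕ) (hN : 3 ≤ N) (hk : 1 ≤ k)
    (R : Fin N → ℕ)
    (hRinj : Function.Injective R)
    (hRmem : ∀ i, R i ∈ Finset.Icc 1 N)
    (G : Fin k → Finset (Fin N))
    (hGne : ∀ ℓ, (G ℓ).Nonempty)
    (hGdisj : ∀ ℓ ℓ', ℓ ≠ ℓ' → Disjoint (G ℓ) (G ℓ'))
    (hGcover : ∀ i, ∃ ℓ, i ∈ G ℓ)
    (n : Fin k → ℕ) (hn : ∀ ℓ, n ℓ = (G ℓ).card)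
    (T₂ : ℕ → ℝ)
    (hT₂ : ∀ r : ℕ, T₂ r = Real.sqrt (180 / (((N : ℝ) ^ 2 - 1) * ((N : ℝ) ^ 2 - 4))) *
      (((r : ℝ) - ((N : ℝ) + 1) / 2) ^ 2 - ((N : ℝ) ^ 2 - 1) / 12))
    (MOOD : ℝ) (LP2 : Fin k → ℝ)
    (hMOOD : MOOD = (180 / ((N : ℝ) * ((N : ℝ) + 1) * ((N : ℝ) ^ 2 - 4))) *
      ∑ ℓ, (n ℓ : ℝ) *
        ((1 / (n ℓ : ℝ)) * (∑ i ∈ G ℓ, ((R i : ℝ) - ((N : ℝ) + 1) / 2) ^ 2)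
          - ((N : ℝ) ^ 2 - 1) / 12) ^ 2)
    (hLP2 : ∀ ℓ, LP2 ℓ = (1 / (n ℓ : ℝ)) * ∑ i ∈ G ℓ, T₂ (R i)) :
    MOOD = (((N : ℝ) - 1) / (N : ℝ)) * ∑ ℓ, (n ℓ : ℝ) * (LP2 ℓ) ^ 2 := by

  have hN3 : (3:ℝ) ≤ (N:ℝ) := by exact_mod_cast hN
  set c : ℝ := Real.sqrt (180 / (((N : ℝ) ^ 2 - 1) * ((N : ℝ) ^ 2 - 4))) with hc
  have h9 : (9:ℝ) ≤ (N:ℝ)^2 := by nlinarith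
  have hden : (0:ℝ) < ((N : ℝ) ^ 2 - 1) * ((N : ℝ) ^ 2 - 4) := by nlinarith
  have hc2 : c ^ 2 = 180 / (((N : ℝ) ^ 2 - 1) * ((N : ℝ) ^ 2 - 4)) := by
    rw [hc, Real.sq_sqrt (by positivity)]
  have hnpos : ∀ ℓ, (0:ℝ) < (n ℓ : ℝ) := by
    intro ℓ
    have := Finset.card_pos.mpr (hGne ℓ)
    rw [hn ℓ]
    exact_mod_cast this
  have hLP : ∀ ℓ, LP2 ℓ = c * ((1 / (n ℓ : ℝ)) * (∑ i ∈ G ℓ, ((R i : ℝ) - ((N : ℝ) + 1) / 2) ^ 2)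
      - ((N : ℝ) ^ 2 - 1) / 12) := by
    intro ℓ
    have hne : (n ℓ : ℝ) ≠ 0 := (hnpos ℓ).ne'
    rw [hLP2 ℓ]
    have hs : ∑ i ∈ G ℓ, T₂ (R i)
        = c * (∑ i ∈ G ℓ, ((R i : ℝ) - ((N : ℝ) + 1) / 2) ^ 2)
          - (n ℓ : ℝ) * (c * (((N : ℝ) ^ 2 - 1) / 12)) := by
      calc ∑ i ∈ G ℓ, T₂ (R i)
          = ∑ i ∈ G ℓ, (c * ((R i : ℝ) - ((N : ℝ) + 1) / 2) ^ 2
              - c * (((N : ℝ) ^ 2 - 1) / 12)) :=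
            Finset.sum_congr rfl (fun i _ => by rw [hT₂]; ring)
        _ = _ := by
            rw [Finset.sum_sub_distrib, ← Finset.mul_sum, Finset.sum_const,
              nsmul_eq_mul, hn ℓ]
    rw [hs]
    generalize (∑ i ∈ G ℓ, ((R i : ℝ) - ((N : ℝ) + 1) / 2) ^ 2) = S
    field_simp
  rw [hMOOD]
  have hsum : ∀ ℓ, (n ℓ : ℝ) * (LP2 ℓ) ^ 2
      = c ^ 2 * ((n ℓ : ℝ) * ((1 / (n ℓ : ℝ)) * (∑ i ∈ G ℓ, ((R i : ℝ) - ((N : ℝ) + 1) / 2) ^ 2)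
          - ((N : ℝ) ^ 2 - 1) / 12) ^ 2) := by
    intro ℓ
    rw [hLP ℓ]; ring
  simp only [hsum, ← Finset.mul_sum, hc2]
  have h1 : (N:ℝ) ≠ 0 := by linarith
  have h2 : (N:ℝ) + 1 ≠ 0 := by linarith
  have h3 : (N:ℝ) ^ 2 - 1 ≠ 0 := by nlinarith
  have h4 : (N:ℝ) ^ 2 - 4 ≠ 0 := by nlinarith
  field_simp
  ring
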